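/- The real span G of the vector fields {P^k_{m,n}, R^k_{m,n} : k ∈ {1,2}, m,n ∈ ℤ≥0} on ℂ⁴ is closed under the Lie bracket, i.e., G is a real Lie subalgebra of the Lie algebra of polynomial vector fields on ℂ⁴. -/
import Mathlib


open MvPolynomial

/-- Polynomials on ℂ⁴ with coordinates (z₁, w₁, z₂, w₂). -/
abbrev Poly4 : Type := MvPolynomial (Fin 4) ℂ

/-- Polynomial vector fields on ℂ⁴, identified with their component polynomials. -/
abbrev VF : Type := Fin 4 → Poly4

/-- Action of a vector field on a polynomial (as a derivation). -/
noncomputable def vAct (v : VF) (p : Poly4) : Poly4 := ∑ i, v i * pderiv i p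

/-- Lie bracket of vector fields, [v,w] = vw − wv as differential operators. -/
noncomputable def vBr (v w : VF) : VF := fun k => vAct v (w k) - vAct w (v k)

/-- The monomial (z₁w₁)^m (z₂w₂)^n, i.e. |z₁|^{2m}|z₂|^{2n}. -/
noncomputable def mon (m n : ℕ) : Poly4 := (X 0 * X 1) ^ m * (X 2 * X 3) ^ n

/-- Planar-radial vector field P¹_{m,n} = (z₁w₁)^m (z₂w₂)^n (z₁ ∂/∂z₁ + w₁ ∂/∂w₁). -/
noncomputable def P1 (m n : ℕ) : VF := fun k => mon m n * ![X 0, X 1, 0, 0] k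

/-- Planar-radial vector field P²_{m,n} = (z₁w₁)^m (z₂w₂)^n (z₂ ∂/∂z₂ + w₂ ∂/∂w₂). -/
noncomputable def P2 (m n : ℕ) : VF := fun k => mon m n * ![0, 0, X 2, X 3] k

/-- Planar-rotating vector field R¹_{m,n} = (z₁w₁)^m (z₂w₂)^n (I z₁ ∂/∂z₁ − I w₁ ∂/∂w₁). -/
noncomputable def R1 (m n : ℕ) : VF :=
  fun k => mon m n * ![C Complex.I * X 0, -(C Complex.I) * X 1, 0, 0] k

/-- Planar-rotating vector field R²_{m,n} = (z₁w₁)^m (z₂w₂)^n (I z₂ ∂/∂z₂ − I w₂ ∂/∂w₂). -/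
noncomputable def R2 (m n : ℕ) : VF :=
  fun k => mon m n * ![0, 0, C Complex.I * X 2, -(C Complex.I) * X 3] k

/-- The generating set of the Lie algebra 𝒢: all P^k_{m,n} and R^k_{m,n}. -/
def genSet : Set VF :=
  {v | ∃ m n : ℕ, v = P1 m n ∨ v = P2 m n ∨ v = R1 m n ∨ v = R2 m n}


/-! ### Auxiliary machinery -/

lemma smulC (r : ℝ) (p : Poly4) : r • p = C (r : ℂ) * p := by
  rw [← algebraMap_smul ℂ r p, smul_eq_C_mul]; norm_num

lemma Xmul_pderiv_pow (i j : Fin 4) (h : j ≠ i) (m : ℕ) :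
    X i * pderiv i ((X i * X j) ^ m) = (m : Poly4) * (X i * X j) ^ m := by
  induction m with
  | zero => simp
  | succ m ih =>
    rw [pow_succ, pderiv_mul, pderiv_mul, pderiv_X_self, pderiv_X_of_ne h]
    push_cast
    linear_combination (X i * X j) * ih

lemma pderiv_pow_zero (i j k : Fin 4) (hj : pderiv i (X j : Poly4) = 0)
    (hk : pderiv i (X k : Poly4) = 0) (n : ℕ) :
    pderiv i ((X j * X k : Poly4) ^ n) = 0 := by
  induction n with
  | zero => simp
  | succ n ih => rw [pow_succ, pderiv_mul, pderiv_mul, hj, hk, ih]; ring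

/-- The weight vector of `mon m n`. -/
def wtv (m n : ℕ) : Fin 4 → ℂ := ![m, m, n, n]

lemma Xmul_pderiv_mon (m n : ℕ) (i : Fin 4) :
    X i * pderiv i (mon m n) = C (wtv m n i) * mon m n := by
  have e : mon m n = (X 0 * X 1) ^ m * (X 2 * X 3) ^ n := rfl
  fin_cases i
  · show X 0 * pderiv 0 (mon m n) = C (wtv m n 0) * mon m n
    rw [e, pderiv_mul, pderiv_pow_zero 0 2 3 (pderiv_X_of_ne (by decide)) (pderiv_X_of_ne (by decide)),
      show C (wtv m n 0) = (m : Poly4) by simp [wtv]]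
    linear_combination ((X 2 * X 3 : Poly4) ^ n) * Xmul_pderiv_pow 0 1 (by decide) m
  · show X 1 * pderiv 1 (mon m n) = C (wtv m n 1) * mon m n
    rw [e, pderiv_mul, pderiv_pow_zero 1 2 3 (pderiv_X_of_ne (by decide)) (pderiv_X_of_ne (by decide)),
      show C (wtv m n 1) = (m : Poly4) by simp [wtv]]
    have h := Xmul_pderiv_pow 1 0 (by decide) m
    rw [mul_comm (X (1 : Fin 4) : Poly4) (X 0)] at h
    linear_combination ((X 2 * X 3 : Poly4) ^ n) * h
  · show X 2 * pderiv 2 (mon m n) = C (wtv m n 2) * mon m n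
    rw [e, pderiv_mul, pderiv_pow_zero 2 0 1 (pderiv_X_of_ne (by decide)) (pderiv_X_of_ne (by decide)),
      show C (wtv m n 2) = (n : Poly4) by simp [wtv]]
    linear_combination ((X 0 * X 1 : Poly4) ^ m) * Xmul_pderiv_pow 2 3 (by decide) n
  · show X 3 * pderiv 3 (mon m n) = C (wtv m n 3) * mon m n
    rw [e, pderiv_mul, pderiv_pow_zero 3 0 1 (pderiv_X_of_ne (by decide)) (pderiv_X_of_ne (by decide)),
      show C (wtv m n 3) = (n : Poly4) by simp [wtv]]
    have h := Xmul_pderiv_pow 3 2 (by decide) n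
    rw [mul_comm (X (3 : Fin 4) : Poly4) (X 2)] at h
    linear_combination ((X 0 * X 1 : Poly4) ^ m) * h

/-- Generic diagonal field `mon m n * a k * X k`. -/
noncomputable def gf (m n : ℕ) (a : Fin 4 → ℂ) : VF := fun k => mon m n * (C (a k) * X k)

lemma mon_mul (m n m' n' : ℕ) : mon m n * mon m' n' = mon (m + m') (n + n') := by
  simp only [mon, pow_add]; ring

lemma gf_br (m n m' n' : ℕ) (a b : Fin 4 → ℂ) :
    vBr (gf m n a) (gf m' n' b) = gf (m + m') (n + n') (fun k =>
      (a 0 * wtv m' n' 0 + a 1 * wtv m' n' 1 + a 2 * wtv m' n' 2 + a 3 * wtv m' n' 3) * b k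
      - (b 0 * wtv m n 0 + b 1 * wtv m n 1 + b 2 * wtv m n 2 + b 3 * wtv m n 3) * a k) := by
  funext k
  have h' : ∀ i, X i * pderiv i (mon m' n') = C (wtv m' n' i) * mon m' n' :=
    Xmul_pderiv_mon m' n'
  have h : ∀ i, X i * pderiv i (mon m n) = C (wtv m n i) * mon m n := Xmul_pderiv_mon m n
  simp only [vBr, vAct, gf, Fin.sum_univ_four, pderiv_mul, pderiv_C, zero_mul, zero_add,
    pderiv_X, map_add, map_sub, map_mul, ← mon_mul m n m' n']
  fin_cases k <;>
    simp only [Fin.isValue, Fin.reduceFinMk, Fin.reduceEq, reduceIte, Pi.single_apply, ite_mul,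
      one_mul, zero_mul, mul_ite, mul_one, mul_zero, add_zero, zero_add, sub_zero]
  · linear_combination (mon m n * C (a 0) * C (b 0) * X 0) * h' 0 +
      (mon m n * C (a 1) * C (b 0) * X 0) * h' 1 + (mon m n * C (a 2) * C (b 0) * X 0) * h' 2 +
      (mon m n * C (a 3) * C (b 0) * X 0) * h' 3 - (mon m' n' * C (b 0) * C (a 0) * X 0) * h 0 -
      (mon m' n' * C (b 1) * C (a 0) * X 0) * h 1 - (mon m' n' * C (b 2) * C (a 0) * X 0) * h 2 -
      (mon m' n' * C (b 3) * C (a 0) * X 0) * h 3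
  · linear_combination (mon m n * C (a 0) * C (b 1) * X 1) * h' 0 +
      (mon m n * C (a 1) * C (b 1) * X 1) * h' 1 + (mon m n * C (a 2) * C (b 1) * X 1) * h' 2 +
      (mon m n * C (a 3) * C (b 1) * X 1) * h' 3 - (mon m' n' * C (b 0) * C (a 1) * X 1) * h 0 -
      (mon m' n' * C (b 1) * C (a 1) * X 1) * h 1 - (mon m' n' * C (b 2) * C (a 1) * X 1) * h 2 -
      (mon m' n' * C (b 3) * C (a 1) * X 1) * h 3
  · linear_combination (mon m n * C (a 0) * C (b 2) * X 2) * h' 0 +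
      (mon m n * C (a 1) * C (b 2) * X 2) * h' 1 + (mon m n * C (a 2) * C (b 2) * X 2) * h' 2 +
      (mon m n * C (a 3) * C (b 2) * X 2) * h' 3 - (mon m' n' * C (b 0) * C (a 2) * X 2) * h 0 -
      (mon m' n' * C (b 1) * C (a 2) * X 2) * h 1 - (mon m' n' * C (b 2) * C (a 2) * X 2) * h 2 -
      (mon m' n' * C (b 3) * C (a 2) * X 2) * h 3
  · linear_combination (mon m n * C (a 0) * C (b 3) * X 3) * h' 0 +
      (mon m n * C (a 1) * C (b 3) * X 3) * h' 1 + (mon m n * C (a 2) * C (b 3) * X 3) * h' 2 +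
      (mon m n * C (a 3) * C (b 3) * X 3) * h' 3 - (mon m' n' * C (b 0) * C (a 3) * X 3) * h 0 -
      (mon m' n' * C (b 1) * C (a 3) * X 3) * h 1 - (mon m' n' * C (b 2) * C (a 3) * X 3) * h 2 -
      (mon m' n' * C (b 3) * C (a 3) * X 3) * h 3

lemma P1_eq (m n : ℕ) : P1 m n = gf m n ![1, 1, 0, 0] := by
  funext k; fin_cases k <;> simp [P1, gf]

lemma P2_eq (m n : ℕ) : P2 m n = gf m n ![0, 0, 1, 1] := by
  funext k; fin_cases k <;> simp [P2, gf]

lemma R1_eq (m n : ℕ) : R1 m n = gf m n ![Complex.I, -Complex.I, 0, 0] := by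
  funext k; fin_cases k <;> simp [R1, gf]

lemma R2_eq (m n : ℕ) : R2 m n = gf m n ![0, 0, Complex.I, -Complex.I] := by
  funext k; fin_cases k <;> simp [R2, gf]

lemma mem1 (m n : ℕ) : gf m n ![1, 1, 0, 0] ∈ Submodule.span ℝ genSet :=
  Submodule.subset_span ⟨m, n, Or.inl (P1_eq m n).symm⟩

lemma mem2 (m n : ℕ) : gf m n ![0, 0, 1, 1] ∈ Submodule.span ℝ genSet :=
  Submodule.subset_span ⟨m, n, Or.inr (Or.inl (P2_eq m n).symm)⟩

lemma mem3 (m n : ℕ) : gf m n ![Complex.I, -Complex.I, 0, 0] ∈ Submodule.span ℝ genSet :=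
  Submodule.subset_span ⟨m, n, Or.inr (Or.inr (Or.inl (R1_eq m n).symm))⟩

lemma mem4 (m n : ℕ) : gf m n ![0, 0, Complex.I, -Complex.I] ∈ Submodule.span ℝ genSet :=
  Submodule.subset_span ⟨m, n, Or.inr (Or.inr (Or.inr (R2_eq m n).symm))⟩

lemma gf_comb {M N : ℕ} {a b c : Fin 4 → ℂ} (r₁ r₂ : ℝ)
    (ha : gf M N a ∈ Submodule.span ℝ genSet) (hb : gf M N b ∈ Submodule.span ℝ genSet)
    (h : ∀ k, c k = (r₁ : ℂ) * b k - (r₂ : ℂ) * a k) :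
    gf M N c ∈ Submodule.span ℝ genSet := by
  have e : gf M N c = r₁ • gf M N b - r₂ • gf M N a := by
    funext k
    simp only [gf, Pi.sub_apply, Pi.smul_apply, h k, map_sub, map_mul, smulC]
    ring
  rw [e]
  exact sub_mem (Submodule.smul_mem _ _ hb) (Submodule.smul_mem _ _ ha)

lemma gen_br : ∀ x ∈ genSet, ∀ y ∈ genSet, vBr x y ∈ Submodule.span ℝ genSet := by
  rintro x ⟨m, n, hx⟩ y ⟨m', n', hy⟩
  rcases hx with rfl | rfl | rfl | rfl <;> rcases hy with rfl | rfl | rfl | rfl <;>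
    simp only [P1_eq, P2_eq, R1_eq, R2_eq, gf_br]
  · exact gf_comb (2 * m') (2 * m) (mem1 _ _) (mem1 _ _) (fun k => by
      fin_cases k <;> simp [wtv] <;> push_cast <;> ring)
  · exact gf_comb (2 * m') (2 * n) (mem1 _ _) (mem2 _ _) (fun k => by
      fin_cases k <;> simp [wtv] <;> push_cast <;> ring)
  · exact gf_comb (2 * m') 0 (mem1 _ _) (mem3 _ _) (fun k => by
      fin_cases k <;> simp [wtv] <;> push_cast <;> ring)
  · exact gf_comb (2 * m') 0 (mem1 _ _) (mem4 _ _) (fun k => by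
      fin_cases k <;> simp [wtv] <;> push_cast <;> ring)
  · exact gf_comb (2 * n') (2 * m) (mem2 _ _) (mem1 _ _) (fun k => by
      fin_cases k <;> simp [wtv] <;> push_cast <;> ring)
  · exact gf_comb (2 * n') (2 * n) (mem2 _ _) (mem2 _ _) (fun k => by
      fin_cases k <;> simp [wtv] <;> push_cast <;> ring)
  · exact gf_comb (2 * n') 0 (mem2 _ _) (mem3 _ _) (fun k => by
      fin_cases k <;> simp [wtv] <;> push_cast <;> ring)
  · exact gf_comb (2 * n') 0 (mem2 _ _) (mem4 _ _) (fun k => by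
      fin_cases k <;> simp [wtv] <;> push_cast <;> ring)
  · exact gf_comb 0 (2 * m) (mem3 _ _) (mem1 _ _) (fun k => by
      fin_cases k <;> simp [wtv] <;> push_cast <;> ring)
  · exact gf_comb 0 (2 * n) (mem3 _ _) (mem2 _ _) (fun k => by
      fin_cases k <;> simp [wtv] <;> push_cast <;> ring)
  · exact gf_comb 0 0 (mem3 _ _) (mem3 _ _) (fun k => by
      fin_cases k <;> simp [wtv] <;> push_cast <;> ring)
  · exact gf_comb 0 0 (mem3 _ _) (mem4 _ _) (fun k => by
      fin_cases k <;> simp [wtv] <;> push_cast <;> ring)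
  · exact gf_comb 0 (2 * m) (mem4 _ _) (mem1 _ _) (fun k => by
      fin_cases k <;> simp [wtv] <;> push_cast <;> ring)
  · exact gf_comb 0 (2 * n) (mem4 _ _) (mem2 _ _) (fun k => by
      fin_cases k <;> simp [wtv] <;> push_cast <;> ring)
  · exact gf_comb 0 0 (mem4 _ _) (mem3 _ _) (fun k => by
      fin_cases k <;> simp [wtv] <;> push_cast <;> ring)
  · exact gf_comb 0 0 (mem4 _ _) (mem4 _ _) (fun k => by
      fin_cases k <;> simp [wtv] <;> push_cast <;> ring)

lemma vBr_zero_left (w : VF) : vBr 0 w = 0 := by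
  funext k; simp [vBr, vAct]

lemma vBr_zero_right (v : VF) : vBr v 0 = 0 := by
  funext k; simp [vBr, vAct]

lemma vBr_add_left (u v w : VF) : vBr (u + v) w = vBr u w + vBr v w := by
  funext k
  simp only [vBr, vAct, Pi.add_apply, map_add, add_mul, mul_add, Finset.sum_add_distrib]
  ring

lemma vBr_add_right (u v w : VF) : vBr u (v + w) = vBr u v + vBr u w := by
  funext k
  simp only [vBr, vAct, Pi.add_apply, map_add, add_mul, mul_add, Finset.sum_add_distrib]
  ring

lemma vBr_smul_left (r : ℝ) (v w : VF) : vBr (r • v) w = r • vBr v w := by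
  funext k
  simp only [vBr, vAct, Pi.smul_apply, smulC, pderiv_mul, pderiv_C, zero_mul, zero_add,
    Fin.sum_univ_four]
  ring

lemma vBr_smul_right (r : ℝ) (v w : VF) : vBr v (r • w) = r • vBr v w := by
  funext k
  simp only [vBr, vAct, Pi.smul_apply, smulC, pderiv_mul, pderiv_C, zero_mul, zero_add,
    Fin.sum_univ_four]
  ring

/-- The real span of {P^k_{m,n}, R^k_{m,n}} is closed under the Lie bracket,
i.e., it is a real Lie subalgebra of the polynomial vector fields on ℂ⁴. -/
theorem span_closed_under_bracket :
    ∀ v ∈ Submodule.span ℝ genSet, ∀ w ∈ Submodule.span ℝ genSet,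
      vBr v w ∈ Submodule.span ℝ genSet := by
  intro v hv w hw
  induction hv, hw using Submodule.span_induction₂ with
  | mem_mem x y hx hy => exact gen_br x hx y hy
  | zero_left y hy => rw [vBr_zero_left]; exact Submodule.zero_mem _
  | zero_right x hx => rw [vBr_zero_right]; exact Submodule.zero_mem _
  | add_left x y z hx hy hz h1 h2 => rw [vBr_add_left]; exact Submodule.add_mem _ h1 h2
  | add_right x y z hx hy hz h1 h2 => rw [vBr_add_right]; exact Submodule.add_mem _ h1 h2
  | smul_left r x y hx hy h1 => rw [vBr_smul_left]; exact Submodule.smul_mem _ _ h1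
  | smul_right r x y hx hy h1 => rw [vBr_smul_right]; exact Submodule.smul_mem _ _ h1
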